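/- arXiv:1911.07971 — 3 statements merged into one kernel-verified Lean document; each statement's English description precedes it below -/
import Mathlib

section
/- Let H be a d×d Hadamard matrix with rows h_1,...,h_d, and let C_RM = {h_i : i ∈ [d]} ∪ {−h_i : i ∈ [d]}. Then for every x ∈ S^{d-1} there exists c ∈ C_RM with ⟨x, c⟩ ≥ 1; hence B(0,1) ⊆ conv(C_RM) ⊆ B(0, √d). -/
open scoped RealInnerProductSpace

theorem stmt_9 (d : ℕ) (hd : 0 < d) (H : Matrix (Fin d) (Fin d) ℝ)
    (hent : ∀ i j, H i j = 1 ∨ H i j = -1)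
    (horth : H.transpose * H = (d : ℝ) • 1) :
    let row : Fin d → EuclideanSpace ℝ (Fin d) := fun i => WithLp.toLp 2 (fun j => H i j)
    let CRM : Set (EuclideanSpace ℝ (Fin d)) := {c | ∃ i, c = row i ∨ c = -row i}
    (∀ x : EuclideanSpace ℝ (Fin d), ‖x‖ = 1 → ∃ c ∈ CRM, 1 ≤ ⟪x, c⟫) ∧
      Metric.closedBall (0 : EuclideanSpace ℝ (Fin d)) 1 ⊆ convexHull ℝ CRM ∧
      convexHull ℝ CRM ⊆ Metric.closedBall (0 : EuclideanSpace ℝ (Fin d)) (Real.sqrt d) := by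
  intro row CRM
  have hHtH : ∀ j k, (∑ i, H i j * H i k) = if j = k then (d : ℝ) else 0 := by
    intro j k
    have := congrFun (congrFun horth j) k
    simpa [Matrix.mul_apply, Matrix.transpose_apply, Matrix.smul_apply, Matrix.one_apply]
      using this
  have hnorm : ∀ i, ‖row i‖ = Real.sqrt d := by
    intro i
    rw [EuclideanSpace.norm_eq]
    congr 1
    have h1 : ∀ j, (row i j) ^ 2 = 1 := by
      intro j; rcases hent i j with h | h <;> simp [row, h]
    simp [h1]
  -- part 1
  have part1 : ∀ x : EuclideanSpace ℝ (Fin d), ‖x‖ = 1 → ∃ c ∈ CRM, 1 ≤ ⟪x, c⟫ := by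
    intro x hx
    set y : Fin d → ℝ := fun i => ∑ j, x j * H i j with hy
    have hx2 : ∑ j, x j * x j = 1 := by
      have h := real_inner_self_eq_norm_sq x
      rw [hx] at h
      simp only [PiLp.inner_apply, RCLike.inner_apply, conj_trivial, one_pow] at h
      exact h
    have hsum : ∑ i, (y i) ^ 2 = (d : ℝ) := by
      have h1 : ∀ i, (y i) ^ 2 = ∑ j, ∑ k, (x j * x k) * (H i j * H i k) := by
        intro i
        rw [sq, hy]
        rw [Finset.sum_mul_sum]
        refine Finset.sum_congr rfl fun j _ => Finset.sum_congr rfl fun k _ => by ring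
      calc ∑ i, (y i) ^ 2 = ∑ i, ∑ j, ∑ k, (x j * x k) * (H i j * H i k) := by
            simp only [h1]
        _ = ∑ j, ∑ k, (x j * x k) * (∑ i, H i j * H i k) := by
            rw [Finset.sum_comm]
            refine Finset.sum_congr rfl fun j _ => ?_
            rw [Finset.sum_comm]
            exact Finset.sum_congr rfl fun k _ => (Finset.mul_sum _ _ _).symm
        _ = ∑ j, (x j * x j) * d := by
            refine Finset.sum_congr rfl fun j _ => ?_
            simp [hHtH, mul_ite, Finset.sum_ite_eq]
        _ = (d : ℝ) := by rw [← Finset.sum_mul, hx2, one_mul]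
    have hex : ∃ i, 1 ≤ (y i) ^ 2 := by
      by_contra h
      push_neg at h
      have : ∑ i, (y i) ^ 2 < ∑ _i : Fin d, (1 : ℝ) := by
        refine Finset.sum_lt_sum_of_nonempty ?_ fun i _ => h i
        exact Finset.univ_nonempty_iff.mpr ⟨⟨0, hd⟩⟩
      simp only [Finset.sum_const, Finset.card_univ, Fintype.card_fin, nsmul_eq_mul,
        mul_one] at this
      rw [hsum] at this
      exact lt_irrefl _ this
    obtain ⟨i, hi⟩ := hex
    have habs : 1 ≤ |y i| := by nlinarith [abs_nonneg (y i), sq_abs (y i)]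
    rcases le_abs.mp habs with h | h
    · refine ⟨row i, ⟨i, Or.inl rfl⟩, ?_⟩
      have : ⟪x, row i⟫ = y i := by
        simp [PiLp.inner_apply, RCLike.inner_apply, row, hy, mul_comm]
      rw [this]; exact h
    · refine ⟨-row i, ⟨i, Or.inr rfl⟩, ?_⟩
      have : ⟪x, -row i⟫ = -y i := by
        simp [PiLp.inner_apply, RCLike.inner_apply, row, hy, Finset.sum_neg_distrib, mul_comm]
      rw [this]; exact h
  refine ⟨part1, ?_, ?_⟩
  · -- closedBall ⊆ convexHull
    have hfin : CRM.Finite := by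
      have hsub : CRM ⊆ Set.range row ∪ Set.range (fun i => -row i) := by
        rintro c ⟨i, h | h⟩
        · exact Or.inl ⟨i, h.symm⟩
        · exact Or.inr ⟨i, h.symm⟩
      exact Set.Finite.subset ((Set.finite_range row).union (Set.finite_range _)) hsub
    have hclosed : IsClosed (convexHull ℝ CRM) := (hfin.isCompact_convexHull (𝕜 := ℝ)).isClosed
    intro z hz
    by_contra hnot
    obtain ⟨f, u, hfs, hfz⟩ :=
      geometric_hahn_banach_closed_point (convex_convexHull ℝ CRM) hclosed hnot
    have h0mem : (0 : EuclideanSpace ℝ (Fin d)) ∈ convexHull ℝ CRM := by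
      have h1 : row ⟨0, hd⟩ ∈ CRM := ⟨⟨0, hd⟩, Or.inl rfl⟩
      have h2 : -row ⟨0, hd⟩ ∈ CRM := ⟨⟨0, hd⟩, Or.inr rfl⟩
      have := (convex_convexHull ℝ CRM) (subset_convexHull ℝ CRM h1)
        (subset_convexHull ℝ CRM h2) (by norm_num : (0:ℝ) ≤ 1/2)
        (by norm_num : (0:ℝ) ≤ 1/2) (by norm_num)
      simpa [smul_neg] using this
    have hu0 : 0 < u := by
      have := hfs 0 h0mem
      simpa using this
    set v : EuclideanSpace ℝ (Fin d) := (InnerProductSpace.toDual ℝ _).symm f with hv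
    have hfv : ∀ w, ⟪v, w⟫ = f w := fun w => InnerProductSpace.toDual_symm_apply
    have hvne : v ≠ 0 := by
      intro h
      have : f z = 0 := by rw [← hfv z, h]; simp
      rw [this] at hfz
      exact absurd (hu0.trans hfz) (lt_irrefl 0)
    have hvnorm : 0 < ‖v‖ := norm_pos_iff.mpr hvne
    set x0 : EuclideanSpace ℝ (Fin d) := ‖v‖⁻¹ • v with hx0
    have hx0norm : ‖x0‖ = 1 := by
      rw [hx0, norm_smul, norm_inv, norm_norm, inv_mul_cancel₀ hvnorm.ne']
    obtain ⟨c, hcmem, hc⟩ := part1 x0 hx0norm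
    have hvc : ‖v‖ ≤ ⟪v, c⟫ := by
      have : ⟪x0, c⟫ = ‖v‖⁻¹ * ⟪v, c⟫ := by
        rw [hx0, real_inner_smul_left]
      rw [this] at hc
      calc ‖v‖ = ‖v‖ * 1 := (mul_one _).symm
        _ ≤ ‖v‖ * (‖v‖⁻¹ * ⟪v, c⟫) := by
            exact mul_le_mul_of_nonneg_left hc hvnorm.le
        _ = ⟪v, c⟫ := by field_simp
    have hfc : f c < u := hfs c (subset_convexHull ℝ CRM hcmem)
    have hfz' : f z ≤ ‖v‖ := by
      rw [← hfv z]
      calc ⟪v, z⟫ ≤ ‖v‖ * ‖z‖ := real_inner_le_norm v z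
        _ ≤ ‖v‖ * 1 := by
            refine mul_le_mul_of_nonneg_left ?_ hvnorm.le
            simpa using mem_closedBall_iff_norm.mp hz
        _ = ‖v‖ := mul_one _
    have : ‖v‖ < ‖v‖ := by
      calc ‖v‖ ≤ ⟪v, c⟫ := hvc
        _ = f c := hfv c
        _ < u := hfc
        _ < f z := hfz
        _ ≤ ‖v‖ := hfz'
    exact lt_irrefl _ this
  · -- convexHull ⊆ closedBall √d
    refine convexHull_min ?_ (convex_closedBall _ _)
    rintro c ⟨i, h | h⟩ <;>
      simp [mem_closedBall_iff_norm, h, hnorm i]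
end

section
/- Any finite set C ⊂ ℝ^d satisfying B(0,1) ⊆ conv(C) ⊆ B(0,R) with R ≥ 1 must have |C| ≥ (1/2)·exp(α·d/R²) for some absolute constant α > 0 (e.g., α = 1/32). -/
open Real MeasureTheory
open scoped ENNReal

namespace Stmt10Aux

noncomputable def g1 (t : ℝ) : ℝ := (Real.sqrt (2*Real.pi))⁻¹ * Real.exp (-(t^2)/2)

lemma g1_nonneg (t : ℝ) : 0 ≤ g1 t :=
  mul_nonneg (inv_nonneg.2 (Real.sqrt_nonneg _)) (Real.exp_pos _).le

lemma g1_measurable : Measurable g1 := by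
  unfold g1; fun_prop

lemma exp_half_integrable : Integrable (fun t : ℝ => Real.exp (-(t^2)/2)) := by
  have : (fun t : ℝ => Real.exp (-(t^2)/2)) = fun t => Real.exp (-(1/2 : ℝ) * t^2) := by
    funext t; congr 1; ring
  rw [this]; exact integrable_exp_neg_mul_sq (by norm_num)

lemma g1_integrable : Integrable g1 := exp_half_integrable.const_mul _

lemma sqrt_two_pi_pos : 0 < Real.sqrt (2*Real.pi) := Real.sqrt_pos.2 (by positivity)

lemma integral_exp_half : ∫ t : ℝ, Real.exp (-(t^2)/2) = Real.sqrt (2*Real.pi) := by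
  have : (fun t : ℝ => Real.exp (-(t^2)/2)) = fun t => Real.exp (-(1/2 : ℝ) * t^2) := by
    funext t; congr 1; ring
  rw [this, integral_gaussian]; congr 1; ring

lemma integral_g1 : ∫ t : ℝ, g1 t = 1 := by
  unfold g1
  rw [integral_const_mul, integral_exp_half, inv_mul_cancel₀ sqrt_two_pi_pos.ne']

lemma key (a : ℝ) : (fun t : ℝ => Real.exp (a*t) * Real.exp (-(t^2)/2))
    = fun t => Real.exp (a^2/2) * Real.exp (-((t-a)^2)/2) := by
  funext t; rw [← Real.exp_add, ← Real.exp_add]; congr 1; ring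

lemma mgf_g1_eq (a : ℝ) : (fun t : ℝ => Real.exp (a*t) * g1 t)
    = fun t => (Real.sqrt (2*Real.pi))⁻¹ * (Real.exp (a*t) * Real.exp (-(t^2)/2)) := by
  funext t; unfold g1; ring

lemma mgf_g1_integrable (a : ℝ) : Integrable (fun t : ℝ => Real.exp (a*t) * g1 t) := by
  rw [mgf_g1_eq, funext fun t => congrArg _ (congrFun (key a) t)]
  exact ((exp_half_integrable.comp_sub_right a).const_mul _).const_mul _

lemma mgf_g1_value (a : ℝ) : ∫ t : ℝ, Real.exp (a*t) * g1 t = Real.exp (a^2/2) := by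
  rw [mgf_g1_eq, integral_const_mul]
  have : ∫ t : ℝ, Real.exp (a*t) * Real.exp (-(t^2)/2)
      = Real.exp (a^2/2) * Real.sqrt (2*Real.pi) := by
    rw [key, integral_const_mul]
    congr 1
    rw [integral_sub_right_eq_self (fun t => Real.exp (-(t^2)/2)) a, integral_exp_half]
  rw [this]
  field_simp

lemma sq_g1_eq : (fun t : ℝ => Real.exp (-(t^2)/2) * g1 t)
    = fun t => (Real.sqrt (2*Real.pi))⁻¹ * Real.exp (-(1:ℝ) * t^2) := by
  funext t; unfold g1
  rw [show (Real.sqrt (2*Real.pi))⁻¹ * Real.exp (-(1:ℝ)*t^2)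
    = (Real.sqrt (2*Real.pi))⁻¹ * (Real.exp (-(t^2)/2) * Real.exp (-(t^2)/2)) from by
      rw [← Real.exp_add]; congr 2; ring]
  ring

lemma sq_g1_integrable : Integrable (fun t : ℝ => Real.exp (-(t^2)/2) * g1 t) := by
  rw [sq_g1_eq]
  exact (integrable_exp_neg_mul_sq (by norm_num)).const_mul _

lemma sq_g1_value : ∫ t : ℝ, Real.exp (-(t^2)/2) * g1 t = (Real.sqrt 2)⁻¹ := by
  rw [sq_g1_eq, integral_const_mul, integral_gaussian]
  rw [show Real.pi / 1 = Real.pi from by ring,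
    Real.sqrt_mul (by norm_num : (0:ℝ) ≤ 2) Real.pi]
  rw [mul_inv]
  have hpi : Real.sqrt Real.pi ≠ 0 := (Real.sqrt_pos.2 Real.pi_pos).ne'
  field_simp


lemma markov {d : ℕ} {G f : (Fin d → ℝ) → ℝ}
    (hG0 : ∀ x, 0 ≤ G x) (hfm : Measurable f) (hGm : Measurable G) (hf0 : ∀ x, 0 ≤ f x)
    (hint : Integrable (fun x => f x * G x)) {T : Set (Fin d → ℝ)} (hT : MeasurableSet T)
    (h1 : ∀ x ∈ T, 1 ≤ f x) :
    (volume : Measure (Fin d → ℝ)).withDensity (fun x => ENNReal.ofReal (G x)) T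
      ≤ ENNReal.ofReal (∫ x, f x * G x) := by
  rw [withDensity_apply _ hT]
  calc ∫⁻ x in T, ENNReal.ofReal (G x) ∂volume
      ≤ ∫⁻ x in T, ENNReal.ofReal (f x * G x) ∂volume := by
        refine setLIntegral_mono (by exact (hfm.mul hGm).ennreal_ofReal) fun x hx => ?_
        exact ENNReal.ofReal_le_ofReal (le_mul_of_one_le_left (hG0 x) (h1 x hx))
    _ ≤ ∫⁻ x, ENNReal.ofReal (f x * G x) ∂volume := setLIntegral_le_lintegral _ _
    _ = ENNReal.ofReal (∫ x, f x * G x) :=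
        (ofReal_integral_eq_lintegral_ofReal hint
          (Filter.Eventually.of_forall fun x => mul_nonneg (hf0 x) (hG0 x))).symm

lemma total_mass {d : ℕ} {G : (Fin d → ℝ) → ℝ}
    (hint : Integrable G) (hG0 : ∀ x, 0 ≤ G x) :
    (volume : Measure (Fin d → ℝ)).withDensity (fun x => ENNReal.ofReal (G x)) Set.univ
      = ENNReal.ofReal (∫ x, G x) := by
  rw [withDensity_apply _ MeasurableSet.univ, Measure.restrict_univ]
  exact (ofReal_integral_eq_lintegral_ofReal hint
    (Filter.Eventually.of_forall hG0)).symm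


lemma cover {d : ℕ} (C : Finset (EuclideanSpace ℝ (Fin d)))
    (h1 : Metric.closedBall (0 : EuclideanSpace ℝ (Fin d)) 1 ⊆
      convexHull ℝ (C : Set (EuclideanSpace ℝ (Fin d)))) :
    ∀ v : EuclideanSpace ℝ (Fin d), ∃ c ∈ C, ‖v‖ ≤ inner ℝ v c := by
  intro v
  have hCne : C.Nonempty := by
    have h0 : (0 : EuclideanSpace ℝ (Fin d)) ∈ convexHull ℝ (C : Set _) :=
      h1 (Metric.mem_closedBall_self zero_le_one)
    have := convexHull_nonempty_iff.1 ⟨0, h0⟩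
    exact_mod_cast Finset.coe_nonempty.1 (by exact_mod_cast this)
  rcases eq_or_ne v 0 with rfl | hv
  · obtain ⟨c, hc⟩ := hCne
    exact ⟨c, hc, by simp⟩
  · set y : EuclideanSpace ℝ (Fin d) := ‖v‖⁻¹ • v with hy_def
    have hyn : ‖y‖ = 1 := norm_smul_inv_norm hv
    have hy : y ∈ convexHull ℝ (C : Set _) := h1 (by
      simp [Metric.mem_closedBall, hyn])
    have hconv : ConvexOn ℝ Set.univ (fun z : EuclideanSpace ℝ (Fin d) => (inner ℝ y z : ℝ)) := by
      refine ⟨convex_univ, fun p _ q _ a b _ _ _ => le_of_eq ?_⟩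
      simp [inner_add_right, inner_smul_right]
    obtain ⟨c, hcC, hc⟩ := hconv.exists_ge_of_mem_convexHull (Set.subset_univ _) hy
    refine ⟨c, hcC, ?_⟩
    have h2 : (1 : ℝ) ≤ inner ℝ y c := by
      have : (inner ℝ y y : ℝ) = 1 := by
        rw [real_inner_self_eq_norm_sq, hyn]; norm_num
      linarith [hc, this.symm ▸ hc]
    have h3 : (inner ℝ y c : ℝ) = ‖v‖⁻¹ * inner ℝ v c := by
      rw [hy_def, real_inner_smul_left]
    have hvpos : (0 : ℝ) < ‖v‖ := norm_pos_iff.2 hv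
    have := (mul_le_mul_iff_right₀ hvpos).2 h2
    rw [h3, ← mul_assoc, mul_inv_cancel₀ hvpos.ne', one_mul, mul_one] at this
    exact this

noncomputable def gmeas (d : ℕ) : Measure (Fin d → ℝ) :=
  (volume : Measure (Fin d → ℝ)).withDensity (fun x => ENNReal.ofReal (∏ i, g1 (x i)))

lemma Gmeasurable (d : ℕ) : Measurable fun x : Fin d → ℝ => ∏ i, g1 (x i) :=
  Finset.measurable_prod _ (fun i _ => g1_measurable.comp (measurable_pi_apply i))


lemma boundT1 {d : ℕ} (c : Fin d → ℝ) (s t : ℝ) (ht0 : 0 ≤ t) :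
    gmeas d {x | s ≤ ∑ i, x i * c i}
      ≤ ENNReal.ofReal (Real.exp (-(t*s) + t^2/2 * ∑ i, (c i)^2)) := by
  have heq : ∀ x : Fin d → ℝ,
      Real.exp (t * ((∑ i, x i * c i) - s)) * (∏ i, g1 (x i))
      = Real.exp (-(t*s)) * ∏ i, (Real.exp ((t * c i) * x i) * g1 (x i)) := by
    intro x
    rw [Finset.prod_mul_distrib, ← Real.exp_sum, ← mul_assoc, ← Real.exp_add]
    congr 2
    rw [mul_sub, Finset.mul_sum]
    rw [show ∑ i, t * (x i * c i) = ∑ i, (t * c i) * x i from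
      Finset.sum_congr rfl fun i _ => by ring]
    ring
  have hint : Integrable
      (fun x : Fin d → ℝ => Real.exp (t * ((∑ i, x i * c i) - s)) * (∏ i, g1 (x i))) := by
    simp_rw [heq]
    exact (Integrable.fintype_prod (fun i => mgf_g1_integrable (t * c i))).const_mul _
  have hmb : gmeas d {x | s ≤ ∑ i, x i * c i}
      ≤ ENNReal.ofReal (∫ x : Fin d → ℝ,
          Real.exp (t * ((∑ i, x i * c i) - s)) * (∏ i, g1 (x i))) := by
    refine markov (fun x => Finset.prod_nonneg fun i _ => g1_nonneg _) ?_ (Gmeasurable d)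
      (fun x => (Real.exp_pos _).le) hint ?_ ?_
    · apply Measurable.exp
      exact (measurable_const.mul ((Finset.measurable_sum _ fun i _ =>
        (measurable_pi_apply i).mul_const _).sub measurable_const))
    · exact measurableSet_le measurable_const
        (Finset.measurable_sum _ fun i _ => (measurable_pi_apply i).mul_const _)
    · intro x hx
      exact Real.one_le_exp (mul_nonneg ht0 (sub_nonneg.2 hx))
  refine hmb.trans (le_of_eq ?_)
  congr 1
  simp_rw [heq]
  rw [integral_const_mul, volume_pi, integral_fintype_prod_eq_prod (ι := Fin d)
    (fun i x => Real.exp ((t * c i) * x) * g1 x)]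
  rw [show ∏ i, ∫ x : ℝ, Real.exp ((t * c i) * x) * g1 x
    = ∏ i, Real.exp ((t * c i)^2/2) from Finset.prod_congr rfl fun i _ => mgf_g1_value _]
  rw [← Real.exp_sum, ← Real.exp_add]
  congr 1
  rw [Finset.mul_sum]
  exact congrArg _ (Finset.sum_congr rfl fun i _ => by ring)

lemma gmeas_univ (d : ℕ) : gmeas d Set.univ = 1 := by
  have hint : Integrable (fun x : Fin d → ℝ => ∏ i, g1 (x i)) :=
    Integrable.fintype_prod (fun _ => g1_integrable)
  rw [gmeas, withDensity_apply _ MeasurableSet.univ, Measure.restrict_univ,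
    ← ofReal_integral_eq_lintegral_ofReal hint
      (Filter.Eventually.of_forall fun x => Finset.prod_nonneg fun i _ => g1_nonneg _)]
  rw [volume_pi, integral_fintype_prod_eq_prod (ι := Fin d) (fun _ x => g1 x)]
  simp [integral_g1]

lemma boundT2 {d : ℕ} :
    gmeas d {x | ∑ i, (x i)^2 ≤ (d:ℝ)/4}
      ≤ ENNReal.ofReal (Real.exp ((d:ℝ)/8) * ((Real.sqrt 2)⁻¹)^d) := by
  have heq : ∀ x : Fin d → ℝ,
      Real.exp ((1/2) * ((d:ℝ)/4 - ∑ i, (x i)^2)) * (∏ i, g1 (x i))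
      = Real.exp ((d:ℝ)/8) * ∏ i, (Real.exp (-((x i)^2)/2) * g1 (x i)) := by
    intro x
    rw [Finset.prod_mul_distrib, ← Real.exp_sum, ← mul_assoc, ← Real.exp_add]
    congr 2
    rw [show ∑ i, -((x i)^2)/2 = ∑ i, (-(1/2 : ℝ)) * (x i)^2 from
      Finset.sum_congr rfl fun i _ => by ring, ← Finset.mul_sum]
    ring
  have hint : Integrable
      (fun x : Fin d → ℝ => Real.exp ((1/2) * ((d:ℝ)/4 - ∑ i, (x i)^2)) * (∏ i, g1 (x i))) := by
    simp_rw [heq]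
    exact (Integrable.fintype_prod (fun _ => sq_g1_integrable)).const_mul _
  have hmb : gmeas d {x | ∑ i, (x i)^2 ≤ (d:ℝ)/4}
      ≤ ENNReal.ofReal (∫ x : Fin d → ℝ,
          Real.exp ((1/2) * ((d:ℝ)/4 - ∑ i, (x i)^2)) * (∏ i, g1 (x i))) := by
    refine markov (fun x => Finset.prod_nonneg fun i _ => g1_nonneg _) ?_ (Gmeasurable d)
      (fun x => (Real.exp_pos _).le) hint ?_ ?_
    · apply Measurable.exp
      exact measurable_const.mul (measurable_const.sub
        (Finset.measurable_sum _ fun i _ => (measurable_pi_apply i).pow_const 2))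
    · exact measurableSet_le
        (Finset.measurable_sum _ fun i _ => (measurable_pi_apply i).pow_const 2)
        measurable_const
    · intro x hx
      exact Real.one_le_exp (mul_nonneg (by norm_num) (sub_nonneg.2 hx))
  refine hmb.trans (le_of_eq ?_)
  congr 1
  simp_rw [heq]
  rw [integral_const_mul, volume_pi, integral_fintype_prod_eq_prod (ι := Fin d)
    (fun _ x => Real.exp (-(x^2)/2) * g1 x)]
  rw [show ∏ _i : Fin d, ∫ x : ℝ, Real.exp (-(x^2)/2) * g1 x
    = ∏ _i : Fin d, (Real.sqrt 2)⁻¹ from Finset.prod_congr rfl fun i _ => sq_g1_value]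
  rw [Finset.prod_const]
  simp


end Stmt10Aux

open Stmt10Aux Real MeasureTheory in
theorem stmt_10 :
    ∃ α : ℝ, 0 < α ∧
      ∀ (d : ℕ) (R : ℝ), 1 ≤ R →
        ∀ C : Finset (EuclideanSpace ℝ (Fin d)),
          Metric.closedBall (0 : EuclideanSpace ℝ (Fin d)) 1 ⊆
              convexHull ℝ (C : Set (EuclideanSpace ℝ (Fin d))) →
          convexHull ℝ (C : Set (EuclideanSpace ℝ (Fin d))) ⊆
              Metric.closedBall (0 : EuclideanSpace ℝ (Fin d)) R →
          (1 / 2) * Real.exp (α * d / R ^ 2) ≤ (C.card : ℝ) := by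
  refine ⟨1/8, by norm_num, ?_⟩
  intro d R hR C h1 h2
  have hR0 : (0:ℝ) < R := lt_of_lt_of_le one_pos hR
  set p : ℝ := Real.exp (-((d:ℝ)/(8*R^2))) with hp_def
  have hp : 0 < p := Real.exp_pos _
  -- norm bound for elements of C
  have hcR : ∀ c ∈ C, ∑ i, (c i : ℝ)^2 ≤ R^2 := by
    intro c hc
    have hmem : c ∈ Metric.closedBall (0 : EuclideanSpace ℝ (Fin d)) R :=
      h2 (subset_convexHull ℝ _ hc)
    have hnorm : ‖c‖ ≤ R := by simpa [mem_closedBall_zero_iff] using hmem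
    have h2' : ‖c‖^2 ≤ R^2 := pow_le_pow_left₀ (norm_nonneg _) hnorm 2
    rw [EuclideanSpace.norm_eq,
      Real.sq_sqrt (Finset.sum_nonneg fun i _ => sq_nonneg _)] at h2'
    calc ∑ i, (c i)^2 = ∑ i, ‖c i‖^2 :=
          Finset.sum_congr rfl fun i _ => by rw [Real.norm_eq_abs, sq_abs]
      _ ≤ R^2 := h2'
  -- covering
  have hcov : (Set.univ : Set (Fin d → ℝ)) ⊆
      ⋃ c ∈ C, {x : Fin d → ℝ | Real.sqrt (∑ i, (x i)^2) ≤ ∑ i, x i * c i} := by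
    intro x _
    obtain ⟨c, hcC, hc⟩ := cover C h1 (WithLp.toLp 2 x)
    refine Set.mem_biUnion hcC ?_
    have hn : ‖(WithLp.toLp 2 x)‖ = Real.sqrt (∑ i, (x i)^2) := by
      rw [EuclideanSpace.norm_eq]
      congr 1
      exact Finset.sum_congr rfl fun i _ => by rw [Real.norm_eq_abs, sq_abs]
    have hi : (inner ℝ (WithLp.toLp 2 x) c : ℝ) = ∑ i, x i * c i := by
      simp [PiLp.inner_apply, RCLike.inner_apply, mul_comm]
    rw [hn, hi] at hc
    exact hc
  -- splitting of each cone
  have hsplit : ∀ c : EuclideanSpace ℝ (Fin d),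
      {x : Fin d → ℝ | Real.sqrt (∑ i, (x i)^2) ≤ ∑ i, x i * c i} ⊆
        {x : Fin d → ℝ | Real.sqrt d / 2 ≤ ∑ i, x i * c i} ∪
        {x : Fin d → ℝ | ∑ i, (x i)^2 ≤ (d:ℝ)/4} := by
    intro c x hx
    by_cases h : ∑ i, (x i)^2 ≤ (d:ℝ)/4
    · exact Or.inr h
    · left
      have h1' : Real.sqrt d / 2 ≤ Real.sqrt (∑ i, (x i)^2) := by
        rw [Real.le_sqrt (by positivity) (Finset.sum_nonneg fun i _ => sq_nonneg _)]
        have : (Real.sqrt d / 2)^2 = (d:ℝ)/4 := by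
          rw [div_pow, Real.sq_sqrt (Nat.cast_nonneg d)]; norm_num
        rw [this]
        linarith [not_le.1 h]
      exact le_trans h1' hx
  -- per-c measure bounds
  have hb1 : ∀ c ∈ C, gmeas d {x : Fin d → ℝ | Real.sqrt d / 2 ≤ ∑ i, x i * c i}
      ≤ ENNReal.ofReal p := by
    intro c hc
    refine (boundT1 (fun i => c i) (Real.sqrt d / 2) (Real.sqrt d / 2 / R^2)
      (by positivity)).trans (ENNReal.ofReal_le_ofReal ?_)
    apply Real.exp_le_exp.2
    have hA : (Real.sqrt d / 2 / R^2)^2/2 * ∑ i, (c i)^2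
        ≤ (Real.sqrt d / 2 / R^2)^2/2 * R^2 :=
      mul_le_mul_of_nonneg_left (hcR c hc) (by positivity)
    have hd : Real.sqrt d ^ 2 = (d:ℝ) := Real.sq_sqrt (Nat.cast_nonneg d)
    have hE : -((Real.sqrt d / 2 / R^2) * (Real.sqrt d / 2))
        + (Real.sqrt d / 2 / R^2)^2/2 * R^2 = -((d:ℝ)/(8*R^2)) := by
      field_simp
      nlinarith [hd]
    linarith
  have hb2 : gmeas d {x : Fin d → ℝ | ∑ i, (x i)^2 ≤ (d:ℝ)/4}
      ≤ ENNReal.ofReal p := by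
    refine boundT2.trans (ENNReal.ofReal_le_ofReal ?_)
    have hhalf : Real.exp (1/2) ≤ 2 := by
      have hs : Real.exp (1/2) * Real.exp (1/2) = Real.exp 1 := by
        rw [← Real.exp_add]; norm_num
      nlinarith [Real.exp_one_lt_d9, Real.exp_pos (1/2 : ℝ)]
    have hq : Real.exp (1/4) ≤ Real.sqrt 2 := by
      rw [Real.le_sqrt (Real.exp_pos _).le (by norm_num)]
      have : Real.exp (1/4) ^ 2 = Real.exp (1/2) := by
        rw [← Real.exp_nat_mul]; norm_num
      rw [this]; exact hhalf
    have hinv : (Real.sqrt 2)⁻¹ ≤ Real.exp (-(1/4)) := by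
      rw [Real.exp_neg]
      exact inv_anti₀ (Real.exp_pos _) hq
    have hpow : ((Real.sqrt 2)⁻¹)^d ≤ Real.exp (-((d:ℝ)/4)) := by
      calc ((Real.sqrt 2)⁻¹)^d ≤ (Real.exp (-(1/4)))^d :=
            pow_le_pow_left₀ (by positivity) hinv d
        _ = Real.exp (-((d:ℝ)/4)) := by
            rw [← Real.exp_nat_mul]; congr 1; ring
    calc Real.exp ((d:ℝ)/8) * ((Real.sqrt 2)⁻¹)^d
        ≤ Real.exp ((d:ℝ)/8) * Real.exp (-((d:ℝ)/4)) :=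
          mul_le_mul_of_nonneg_left hpow (Real.exp_pos _).le
      _ = Real.exp (-((d:ℝ)/8)) := by rw [← Real.exp_add]; congr 1; ring
      _ ≤ p := by
          apply Real.exp_le_exp.2
          have hdiv : (d:ℝ)/(8*R^2) ≤ (d:ℝ)/8 := by
            rw [div_le_div_iff₀ (by positivity) (by norm_num)]
            have hR2 : (1:ℝ) ≤ R^2 := by nlinarith
            nlinarith [show (0:ℝ) ≤ (d:ℝ) from Nat.cast_nonneg d]
          linarith
  -- main chain
  have hchain : (1 : ℝ≥0∞) ≤ (C.card : ℝ≥0∞) * ENNReal.ofReal (2 * p) := by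
    calc (1:ℝ≥0∞) = gmeas d Set.univ := (gmeas_univ d).symm
      _ ≤ gmeas d (⋃ c ∈ C,
          {x : Fin d → ℝ | Real.sqrt (∑ i, (x i)^2) ≤ ∑ i, x i * c i}) :=
          measure_mono hcov
      _ ≤ ∑ c ∈ C, gmeas d
          {x : Fin d → ℝ | Real.sqrt (∑ i, (x i)^2) ≤ ∑ i, x i * c i} :=
          measure_biUnion_finset_le _ _
      _ ≤ ∑ _c ∈ C, ENNReal.ofReal (2 * p) := by
          refine Finset.sum_le_sum fun c hc => ?_
          calc gmeas d {x : Fin d → ℝ | Real.sqrt (∑ i, (x i)^2) ≤ ∑ i, x i * c i}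
              ≤ gmeas d ({x : Fin d → ℝ | Real.sqrt d / 2 ≤ ∑ i, x i * c i} ∪
                {x : Fin d → ℝ | ∑ i, (x i)^2 ≤ (d:ℝ)/4}) := measure_mono (hsplit c)
            _ ≤ gmeas d {x : Fin d → ℝ | Real.sqrt d / 2 ≤ ∑ i, x i * c i} +
                gmeas d {x : Fin d → ℝ | ∑ i, (x i)^2 ≤ (d:ℝ)/4} := measure_union_le _ _
            _ ≤ ENNReal.ofReal p + ENNReal.ofReal p := add_le_add (hb1 c hc) hb2
            _ = ENNReal.ofReal (2 * p) := by
                rw [← ENNReal.ofReal_add hp.le hp.le]; congr 1; ring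
      _ = C.card • ENNReal.ofReal (2 * p) := Finset.sum_const _
      _ = (C.card : ℝ≥0∞) * ENNReal.ofReal (2 * p) := by rw [nsmul_eq_mul]
  have hreal : (1:ℝ) ≤ C.card * (2*p) := by
    have hne : (C.card : ℝ≥0∞) * ENNReal.ofReal (2 * p) ≠ ⊤ :=
      ENNReal.mul_ne_top (ENNReal.natCast_ne_top _) ENNReal.ofReal_ne_top
    have := ENNReal.toReal_mono hne hchain
    simpa [ENNReal.toReal_mul, ENNReal.toReal_ofReal (by positivity : (0:ℝ) ≤ 2*p), ENNReal.toReal_ofReal hp.le]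
      using this
  have hkey : Real.exp ((1/8 : ℝ) * d / R^2) = p⁻¹ := by
    rw [← Real.exp_neg]; congr 1; field_simp
  rw [hkey, show (1/2:ℝ)*p⁻¹ = 1/(2*p) from by field_simp]
  rw [div_le_iff₀ (by positivity)]
  linarith
end

section
/- Let d+1 = 2^p and let H be the (d+1)×(d+1) Sylvester Hadamard matrix. For i ∈ [d+1] let h_i ∈ ℝ^d be the i-th column of H with first coordinate removed, and set C_H = {2√d·h_i : i ∈ [d+1]}. Then every v ∈ B(0,1) equals Σ_i a_i·(2√d·h_i) with a_i = (1/(d+1))·(1 + ⟨h_i, v⟩/(2√d)), and these a_i are nonnegative and sum to 1. -/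
open scoped RealInnerProductSpace

theorem stmt_14 (d p : ℕ) (hp : d + 1 = 2 ^ p)
    (H : Matrix (Fin (d + 1)) (Fin (d + 1)) ℝ)
    (hent : ∀ i j, H i j = 1 ∨ H i j = -1)
    (horth₁ : H.transpose * H = ((d : ℝ) + 1) • 1)
    (horth₂ : H * H.transpose = ((d : ℝ) + 1) • 1)
    (hfirst : ∀ j, H 0 j = 1)
    (v : EuclideanSpace ℝ (Fin d)) (hv : ‖v‖ ≤ 1) :
    let h : Fin (d + 1) → EuclideanSpace ℝ (Fin d) := fun i => WithLp.toLp 2 (fun k : Fin d => H k.succ i)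
    let a : Fin (d + 1) → ℝ := fun i =>
      (1 / ((d : ℝ) + 1)) * (1 + ⟪h i, v⟫ / (2 * Real.sqrt d))
    (∀ i, 0 ≤ a i) ∧ (∑ i, a i = 1) ∧
      (∑ i, a i • ((2 * Real.sqrt d) • h i) = v) := by
  intro h a
  have hh : ∀ i (k : Fin d), h i k = H k.succ i := fun i k => rfl
  have ha : ∀ i, a i = (1 / ((d : ℝ) + 1)) * (1 + ⟪h i, v⟫ / (2 * Real.sqrt d)) :=
    fun i => rfl
  have hd1 : ((d : ℝ) + 1) ≠ 0 := by positivity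
  -- row orthogonality
  have hrow : ∀ r s : Fin (d + 1), ∑ i, H r i * H s i
      = if r = s then ((d : ℝ) + 1) else 0 := by
    intro r s
    have := congrFun (congrFun horth₂ r) s
    simpa [Matrix.mul_apply, Matrix.smul_apply, Matrix.one_apply, Matrix.transpose_apply,
      mul_ite, mul_one, mul_zero] using this
  have hsum : ∀ k : Fin d, ∑ i, H k.succ i = 0 := by
    intro k
    have h0 := hrow k.succ 0
    rw [if_neg (Fin.succ_ne_zero k)] at h0
    simpa [hfirst, mul_one] using h0
  have hinner : ∀ i, ⟪h i, v⟫ = ∑ m, H m.succ i * v m := by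
    intro i
    simp [PiLp.inner_apply, RCLike.inner_apply, conj_trivial, hh]
    exact Finset.sum_congr rfl fun m _ => mul_comm _ _
  have hS : ∑ i, ⟪h i, v⟫ = 0 := by
    calc ∑ i, ⟪h i, v⟫ = ∑ i, ∑ m, H m.succ i * v m := by
          exact Finset.sum_congr rfl fun i _ => hinner i
      _ = ∑ m, (∑ i, H m.succ i) * v m := by
          rw [Finset.sum_comm]
          exact Finset.sum_congr rfl fun m _ => (Finset.sum_mul ..).symm
      _ = 0 := by simp [hsum]
  -- norm of h i
  have hnorm : ∀ i, ⟪h i, h i⟫ = (d : ℝ) := by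
    intro i
    have : ∀ k : Fin d, H k.succ i * H k.succ i = 1 := by
      intro k
      rcases hent k.succ i with h1 | h1 <;> rw [h1] <;> ring
    rw [PiLp.inner_apply]
    simp [RCLike.inner_apply, conj_trivial, hh, pow_two, this]
  -- Part 1: nonnegativity
  have part1 : ∀ i, 0 ≤ a i := by
    intro i
    rw [ha i]
    rcases Nat.eq_zero_or_pos d with hd | hd
    · subst hd
      have : ⟪h i, v⟫ = 0 := by rw [hinner]; simp
      rw [this]
      norm_num
    · have hsd : 0 < Real.sqrt d := Real.sqrt_pos.mpr (by exact_mod_cast hd)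
      have hni : ‖h i‖ = Real.sqrt d := by
        have h2 : ‖h i‖ ^ 2 = (d : ℝ) := by
          rw [← real_inner_self_eq_norm_sq]; exact hnorm i
        rw [← h2, Real.sqrt_sq (norm_nonneg _)]
      have hcs : |⟪h i, v⟫| ≤ Real.sqrt d := by
        calc |⟪h i, v⟫| ≤ ‖h i‖ * ‖v‖ := abs_real_inner_le_norm _ _
          _ ≤ Real.sqrt d * 1 := by
              rw [hni]; exact mul_le_mul_of_nonneg_left hv (le_of_lt hsd)
          _ = Real.sqrt d := mul_one _
      have hlb : -(Real.sqrt d) ≤ ⟪h i, v⟫ := neg_le_of_abs_le hcs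
      have : -(1/2 : ℝ) ≤ ⟪h i, v⟫ / (2 * Real.sqrt d) := by
        rw [le_div_iff₀ (by positivity : (0:ℝ) < 2 * Real.sqrt d)]
        nlinarith [hlb, hsd]
      have h1 : (0:ℝ) ≤ 1 + ⟪h i, v⟫ / (2 * Real.sqrt d) := by linarith
      have h2 : (0:ℝ) < 1 / ((d : ℝ) + 1) := by positivity
      positivity
  refine ⟨part1, ?_, ?_⟩
  -- Part 2: sum to 1
  · calc ∑ i, a i = (1 / ((d:ℝ)+1)) * ∑ i, (1 + ⟪h i, v⟫ / (2 * Real.sqrt d)) := by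
          rw [Finset.mul_sum]
      _ = (1 / ((d:ℝ)+1)) * ((d:ℝ)+1 + (∑ i, ⟪h i, v⟫) / (2 * Real.sqrt d)) := by
          rw [Finset.sum_add_distrib, ← Finset.sum_div]
          simp
      _ = 1 := by rw [hS]; field_simp; simp
  -- Part 3
  · rcases Nat.eq_zero_or_pos d with hd | hd
    · subst hd
      ext k
      exact k.elim0
    · have hsd : 0 < Real.sqrt d := Real.sqrt_pos.mpr (by exact_mod_cast hd)
      have hc : (2 * Real.sqrt d) ≠ 0 := by positivity
      ext k
      have lhs : (∑ i, a i • ((2 * Real.sqrt d) • h i)) k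
          = ∑ i, a i * ((2 * Real.sqrt d) * H k.succ i) := by
        rw [WithLp.ofLp_sum, Finset.sum_apply k Finset.univ _]
        refine Finset.sum_congr rfl fun i _ => ?_
        simp only [WithLp.ofLp_smul, Pi.smul_apply, PiLp.smul_apply, smul_eq_mul, hh]
      rw [lhs]
      calc ∑ i, a i * ((2 * Real.sqrt d) * H k.succ i)
          = (1/((d:ℝ)+1)) * ∑ i, ((2 * Real.sqrt d) * H k.succ i
              + (∑ m, H m.succ i * v m) * H k.succ i) := by
            rw [Finset.mul_sum]
            refine Finset.sum_congr rfl fun i _ => ?_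
            rw [ha i, hinner i]
            field_simp
        _ = (1/((d:ℝ)+1)) * ((2 * Real.sqrt d) * ∑ i, H k.succ i
              + ∑ m, (∑ i, H m.succ i * H k.succ i) * v m) := by
            rw [Finset.sum_add_distrib, ← Finset.mul_sum]
            congr 2
            calc ∑ i, (∑ m, H m.succ i * v m) * H k.succ i
                = ∑ i, ∑ m, H m.succ i * v m * H k.succ i := by
                  exact Finset.sum_congr rfl fun i _ => Finset.sum_mul ..
              _ = ∑ m, ∑ i, H m.succ i * v m * H k.succ i := Finset.sum_comm
              _ = ∑ m, (∑ i, H m.succ i * H k.succ i) * v m := by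
                  refine Finset.sum_congr rfl fun m _ => ?_
                  rw [Finset.sum_mul]
                  exact Finset.sum_congr rfl fun i _ => by ring
        _ = v k := by
            rw [hsum k]
            have : ∀ m : Fin d, (∑ i, H m.succ i * H k.succ i) * v m
                = (if m = k then ((d:ℝ)+1) else 0) * v m := by
              intro m
              rw [hrow]
              simp [Fin.succ_inj]
            rw [Finset.sum_congr rfl fun m _ => this m]
            simp only [ite_mul, zero_mul, Finset.sum_ite_eq', Finset.mem_univ, if_true]
            field_simp
            ring
end
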